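/- Evaluating at t = 1: for coprime positive integers p, q, an n-th root of unity ω ≠ 1, and complex numbers α₁,...,αₙ, β₁,...,βₙ with αᵢ^p = βⱼ^q = ω and all αᵢ ≠ 1, βⱼ ≠ 1, the number (ω − 1)ⁿ / (∏ᵢ(αᵢ − 1) ∏ⱼ(βⱼ − 1)) is an algebraic integer, provided that for each common eigenvalue multiplicity pattern, v + w ≤ n as in the irreducibility condition (equivalently, assuming each αᵢ has multiplicity vᵢ and each βⱼ multiplicity wⱼ with vᵢ + wⱼ ≤ n for all i,j). -/

import Mathlib

set_option maxHeartbeats 1000000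
set_option synthInstance.maxHeartbeats 400000
set_option linter.unusedSectionVars false
set_option linter.unusedVariables false
set_option linter.unnecessarySimpa false

open Finset Polynomial UniqueFactorizationMonoid

section NuTheory
open scoped Classical

variable {R : Type*} [CommRing R] [IsDomain R] [IsDedekindDomain R]

/-- multiplicity of the prime ideal `P` in the factorization of the ideal generated by `x`. -/
noncomputable def nuP (P : Ideal R) (x : R) : ℕ :=
  Multiset.count P (normalizedFactors (Ideal.span {x}))

lemma spanP_ne_zero {x : R} (hx : x ≠ 0) : Ideal.span {x} ≠ (0 : Ideal R) := by
  simpa [Ideal.span_singleton_eq_bot, Submodule.zero_eq_bot] using hx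

lemma nuP_mul (P : Ideal R) {x y : R} (hx : x ≠ 0) (hy : y ≠ 0) :
    nuP P (x * y) = nuP P x + nuP P y := by
  unfold nuP
  rw [← Ideal.span_singleton_mul_span_singleton,
    normalizedFactors_mul (spanP_ne_zero hx) (spanP_ne_zero hy), Multiset.count_add]

lemma nuP_one (P : Ideal R) : nuP P 1 = 0 := by
  unfold nuP
  rw [Ideal.span_singleton_one, ← Ideal.one_eq_top, normalizedFactors_one]
  simp

lemma nuP_pow (P : Ideal R) {x : R} (hx : x ≠ 0) (m : ℕ) : nuP P (x ^ m) = m * nuP P x := by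
  induction m with
  | zero => simpa using nuP_one P
  | succ m ih =>
    rw [pow_succ, nuP_mul P (pow_ne_zero _ hx) hx, ih]; ring

lemma nuP_prod (P : Ideal R) {ι : Type*} (s : Finset ι) (f : ι → R)
    (hf : ∀ i ∈ s, f i ≠ 0) :
    nuP P (∏ i ∈ s, f i) = ∑ i ∈ s, nuP P (f i) := by
  classical
  induction s using Finset.cons_induction with
  | empty => simpa using nuP_one P
  | cons a s ha ih =>
    rw [Finset.prod_cons, Finset.sum_cons,
      nuP_mul P (hf a (Finset.mem_cons_self a s))
        (Finset.prod_ne_zero_iff.mpr fun i hi => hf i (Finset.mem_cons_of_mem hi)),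
      ih fun i hi => hf i (Finset.mem_cons_of_mem hi)]

lemma nuP_le_of_dvd (P : Ideal R) {x y : R} (hy : y ≠ 0) (h : x ∣ y) :
    nuP P x ≤ nuP P y := by
  obtain ⟨t, rfl⟩ := h
  have hx : x ≠ 0 := left_ne_zero_of_mul hy
  have ht : t ≠ 0 := right_ne_zero_of_mul hy
  rw [nuP_mul P hx ht]
  exact Nat.le_add_right _ _

lemma nuP_eq_nuP (P : Ideal R) {x y : R} (hx : x ≠ 0) (hy : y ≠ 0)
    (h1 : x ∣ y) (h2 : y ∣ x) : nuP P x = nuP P y :=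
  le_antisymm (nuP_le_of_dvd P hy h1) (nuP_le_of_dvd P hx h2)

lemma nuP_pos_iff {P : Ideal R} (hP : Prime P) {x : R} (hx : x ≠ 0) :
    0 < nuP P x ↔ x ∈ P := by
  rw [nuP, Multiset.count_pos, mem_normalizedFactors_iff (spanP_ne_zero hx)]
  constructor
  · rintro ⟨-, h⟩
    exact (Ideal.span_singleton_le_iff_mem P).mp (Ideal.le_of_dvd h)
  · intro h
    exact ⟨hP, Ideal.dvd_iff_le.mpr ((Ideal.span_singleton_le_iff_mem P).mpr h)⟩

lemma nuP_eq_zero {P : Ideal R} (hP : Prime P) {x : R} (hx : x ≠ 0) (h : x ∉ P) :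
    nuP P x = 0 := by
  by_contra hne
  exact h ((nuP_pos_iff hP hx).mp (Nat.pos_of_ne_zero hne))

end NuTheory

section GrpLemmas
open scoped Classical

variable {R : Type*} [CommRing R] [IsDomain R]

lemma memP_of_dvd {P : Ideal R} {a b : R} (ha : a ∈ P) (h : a ∣ b) : b ∈ P := by
  obtain ⟨c, rfl⟩ := h
  exact Ideal.mul_mem_right c P ha

lemma factA {P : Ideal R} {x : R} (hx1 : x ≠ 1) (hxP : x - 1 ∈ P)
    {r : ℕ} (hxr : x ^ r = 1) : ((r : ℕ) : R) ∈ P := by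
  have hg : (∑ i ∈ range r, x ^ i) * (x - 1) = 0 := by
    rw [geom_sum_mul, hxr, sub_self]
  have hz : (∑ i ∈ range r, x ^ i) = 0 := by
    rcases mul_eq_zero.mp hg with h | h
    · exact h
    · exact absurd (sub_eq_zero.mp h) hx1
  have hrw : ((r : ℕ) : R) = ∑ i ∈ range r, (1 - x ^ i) + ∑ i ∈ range r, x ^ i := by
    rw [← Finset.sum_add_distrib]
    simp
  rw [hrw, hz, add_zero]
  refine Ideal.sum_mem _ fun i _ => memP_of_dvd hxP ?_
  have := sub_dvd_pow_sub_pow x 1 i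
  simp only [one_pow] at this
  exact dvd_sub_comm.mp this

lemma factB {P : Ideal R} {ℓ : ℕ} (hchar : ∀ r : ℕ, ((r : ℕ) : R) ∈ P ↔ ℓ ∣ r)
    {x : R} (hxP : x - 1 ∈ P) {c r : ℕ} (hr : ¬ ℓ ∣ r) (hx : x ^ (ℓ ^ c * r) = 1) :
    x ^ ℓ ^ c = 1 := by
  by_contra hne
  have hdvd : x - 1 ∣ x ^ ℓ ^ c - 1 := by
    have := sub_dvd_pow_sub_pow x 1 (ℓ ^ c)
    simpa using this
  have h1 : x ^ ℓ ^ c - 1 ∈ P := memP_of_dvd hxP hdvd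
  have h2 : (x ^ ℓ ^ c) ^ r = 1 := by rw [← pow_mul]; exact hx
  exact hr ((hchar r).mp (factA hne h1 h2))

lemma sub_one_dvd_of_pow {x : R} {M m : ℕ} (hM : x ^ M = 1) (hM1 : 1 < M)
    (hcop : Nat.Coprime m M) : x ^ m - 1 ∣ x - 1 := by
  obtain ⟨w, -, hw⟩ := Nat.exists_mul_mod_eq_one_of_coprime hcop hM1
  have hxw : (x ^ m) ^ w = x := by
    rw [← pow_mul, pow_eq_pow_mod (m * w) hM, hw, pow_one]
  have := sub_dvd_pow_sub_pow (x ^ m) 1 w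
  simp only [one_pow] at this
  rwa [hxw] at this

lemma coset_pow {a b : R} {N r : ℕ} (hN : a ^ N = 1) (hbN : b ^ N = 1) (hNne : N ≠ 0)
    (hab : a ^ r = b ^ r) : (b * a ^ (N - 1)) ^ Nat.gcd N r = 1 := by
  have ha0 : a ≠ 0 := by
    intro h
    rw [h, zero_pow hNne] at hN
    exact zero_ne_one hN
  set z := b * a ^ (N - 1) with hz
  have hzN : z ^ N = 1 := by
    rw [hz, mul_pow, hbN, one_mul, ← pow_mul, mul_comm, pow_mul, hN, one_pow]
  have hzr : z ^ r = 1 := by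
    have key : z ^ r * a ^ r = 1 * a ^ r := by
      rw [hz, mul_pow, one_mul, mul_assoc, ← pow_mul, ← pow_add]
      have hexp : (N - 1) * r + r = N * r := by
        have : 1 ≤ N := Nat.one_le_iff_ne_zero.mpr hNne
        calc (N - 1) * r + r = (N - 1 + 1) * r := by ring
          _ = N * r := by rw [Nat.sub_add_cancel this]
      rw [hexp, pow_mul, hN, one_pow, mul_one, hab]
    exact mul_right_cancel₀ (pow_ne_zero _ ha0) key
  have h1 : orderOf z ∣ N := orderOf_dvd_of_pow_eq_one hzN
  have h2 : orderOf z ∣ r := orderOf_dvd_of_pow_eq_one hzr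
  exact orderOf_dvd_iff_pow_eq_one.mp (Nat.dvd_gcd h1 h2)

end GrpLemmas

section SideLemma
open scoped Classical

variable {R : Type*} [CommRing R] [IsDomain R] [IsDedekindDomain R]

lemma side_lemma {P : Ideal R} (hP : Prime P) {ℓ : ℕ} (hl : ℓ.Prime)
    (hchar : ∀ r : ℕ, ((r : ℕ) : R) ∈ P ↔ ℓ ∣ r)
    {ω : R} (hω1 : ω ≠ 1)
    {c n₀ : ℕ} (hn₀ : ¬ ℓ ∣ n₀) (hωn : ω ^ (ℓ ^ c * n₀) = 1)
    {s r₀ : ℕ} (hr₀ : ¬ ℓ ∣ r₀) {a : R} (ha : a ^ (ℓ ^ s * r₀) = ω) (haP : a - 1 ∈ P) :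
    a ^ ℓ ^ (s + c) = 1 ∧ ℓ ^ s * nuP P (a - 1) = nuP P (ω - 1) := by
  have ha1 : a ≠ 1 := fun h => hω1 (by rw [← ha, h, one_pow])
  have haN : a ^ (ℓ ^ (s + c) * (r₀ * n₀)) = 1 := by
    have hexp : ℓ ^ (s + c) * (r₀ * n₀) = (ℓ ^ s * r₀) * (ℓ ^ c * n₀) := by
      rw [pow_add]; ring
    rw [hexp, pow_mul, ha, hωn]
  have hrn : ¬ ℓ ∣ r₀ * n₀ := by
    intro h
    rcases (Nat.Prime.dvd_mul hl).mp h with h' | h'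
    · exact hr₀ h'
    · exact hn₀ h'
  have h1 : a ^ ℓ ^ (s + c) = 1 := factB hchar haP hrn haN
  -- τ = a ^ ℓ ^ s
  have hτω : (a ^ ℓ ^ s) ^ r₀ = ω := by rw [← pow_mul]; exact ha
  have hτ1 : a ^ ℓ ^ s ≠ 1 := fun h => hω1 (by rw [← hτω, h, one_pow])
  have hτc : (a ^ ℓ ^ s) ^ ℓ ^ c = 1 := by
    rw [← pow_mul, ← pow_add]; exact h1
  -- order of a
  obtain ⟨k, hk_le, hk⟩ := (Nat.dvd_prime_pow hl).mp (orderOf_dvd_of_pow_eq_one h1)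
  have hks : s < k := by
    by_contra hcon
    push_neg at hcon
    have : orderOf a ∣ ℓ ^ s := hk ▸ pow_dvd_pow ℓ hcon
    exact hτ1 (orderOf_dvd_iff_pow_eq_one.mp this)
  have hak : a ^ ℓ ^ k = 1 := by rw [← hk]; exact pow_orderOf_eq_one a
  have hspos : 0 < ℓ ^ s := pow_pos hl.pos s
  haveI : NeZero (ℓ ^ s) := ⟨hspos.ne'⟩
  -- b is a primitive ℓ^s-th root of unity
  have hb : IsPrimitiveRoot (a ^ ℓ ^ (k - s)) (ℓ ^ s) := by
    constructor
    · rw [← pow_mul, ← pow_add, Nat.sub_add_cancel hks.le]; exact hak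
    · intro l hl'
      rw [← pow_mul] at hl'
      have : ℓ ^ k ∣ ℓ ^ (k - s) * l := hk ▸ orderOf_dvd_of_pow_eq_one hl'
      have hsplit : ℓ ^ k = ℓ ^ (k - s) * ℓ ^ s := by
        rw [← pow_add, Nat.sub_add_cancel hks.le]
      rw [hsplit] at this
      exact (Nat.mul_dvd_mul_iff_left (pow_pos hl.pos (k - s))).mp this
  -- each factor 1 - ζ * a is associated to a - 1
  have hfac : ∀ ζ ∈ nthRootsFinset (ℓ ^ s) (1 : R),
      (1 - ζ * a) ≠ 0 ∧ nuP P (1 - ζ * a) = nuP P (a - 1) := by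
    intro ζ hζmem
    have hζpow : ζ ^ ℓ ^ s = 1 := (Polynomial.mem_nthRootsFinset hspos (1 : R)).mp hζmem
    obtain ⟨i, -, hi⟩ := hb.eq_pow_of_pow_eq_one hζpow
    have hζa : ζ * a = a ^ (ℓ ^ (k - s) * i + 1) := by
      rw [← hi, ← pow_mul, ← pow_succ]
    have hmdvd : ¬ ℓ ∣ (ℓ ^ (k - s) * i + 1) := by
      intro h
      have h' : ℓ ∣ ℓ ^ (k - s) * i :=
        dvd_mul_of_dvd_left (dvd_pow_self ℓ (by omega : k - s ≠ 0)) i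
      have : ℓ ∣ 1 := (Nat.dvd_add_right h').mp h
      exact Nat.Prime.one_lt hl |>.ne' (Nat.dvd_one.mp this)
    have hcop : Nat.Coprime (ℓ ^ (k - s) * i + 1) (ℓ ^ k) :=
      Nat.Coprime.pow_right k (((hl.coprime_iff_not_dvd).mpr hmdvd).symm)
    have hM1 : 1 < ℓ ^ k := Nat.one_lt_pow (by omega : k ≠ 0) hl.one_lt
    have dvd1 : a - 1 ∣ a ^ (ℓ ^ (k - s) * i + 1) - 1 := by
      have := sub_dvd_pow_sub_pow a 1 (ℓ ^ (k - s) * i + 1)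
      simpa using this
    have dvd2 : a ^ (ℓ ^ (k - s) * i + 1) - 1 ∣ a - 1 := sub_one_dvd_of_pow hak hM1 hcop
    have ha10 : a - 1 ≠ 0 := sub_ne_zero.mpr ha1
    have ham0 : a ^ (ℓ ^ (k - s) * i + 1) - 1 ≠ 0 := by
      intro h0
      exact ha10 (zero_dvd_iff.mp (h0 ▸ dvd2))
    have heq : 1 - ζ * a = -(a ^ (ℓ ^ (k - s) * i + 1) - 1) := by rw [hζa]; ring
    constructor
    · rw [heq]; exact neg_ne_zero.mpr ham0
    · rw [heq]
      exact nuP_eq_nuP P (neg_ne_zero.mpr ham0) ha10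
        ((neg_dvd).mpr dvd2) ((dvd_neg).mpr dvd1)
  -- the product identity
  have key : (1 : R) - a ^ ℓ ^ s = ∏ ζ ∈ nthRootsFinset (ℓ ^ s) (1 : R), (1 - ζ * a) := by
    have := hb.pow_sub_pow_eq_prod_sub_mul 1 a hspos
    simpa using this
  have hsum : nuP P (1 - a ^ ℓ ^ s) = ℓ ^ s * nuP P (a - 1) := by
    rw [key, nuP_prod P _ _ fun ζ hζ => (hfac ζ hζ).1]
    rw [Finset.sum_congr rfl fun ζ hζ => (hfac ζ hζ).2, Finset.sum_const,
      hb.card_nthRootsFinset, smul_eq_mul]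
  -- 1 - τ is associated to ω - 1
  have hτ0 : a ^ ℓ ^ s - 1 ≠ 0 := sub_ne_zero.mpr hτ1
  have hω0 : ω - 1 ≠ 0 := sub_ne_zero.mpr hω1
  have dvdτω : a ^ ℓ ^ s - 1 ∣ ω - 1 := by
    have := sub_dvd_pow_sub_pow (a ^ ℓ ^ s) 1 r₀
    simpa [hτω] using this
  obtain ⟨g, hg_le, hg⟩ := (Nat.dvd_prime_pow hl).mp (orderOf_dvd_of_pow_eq_one hτc)
  have hg0 : g ≠ 0 := by
    intro h
    rw [h, pow_zero] at hg
    exact hτ1 (orderOf_eq_one_iff.mp hg)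
  have hτord : (a ^ ℓ ^ s) ^ ℓ ^ g = 1 := by rw [← hg]; exact pow_orderOf_eq_one _
  have dvdωτ : ω - 1 ∣ a ^ ℓ ^ s - 1 := by
    have := sub_one_dvd_of_pow hτord (Nat.one_lt_pow hg0 hl.one_lt)
      (((hl.coprime_iff_not_dvd).mpr hr₀).symm.pow_right g)
    rwa [hτω] at this
  have h2 : nuP P (a ^ ℓ ^ s - 1) = nuP P (ω - 1) := nuP_eq_nuP P hτ0 hω0 dvdτω dvdωτ
  have h3 : nuP P (1 - a ^ ℓ ^ s) = nuP P (a ^ ℓ ^ s - 1) := by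
    have hn0 : (1 : R) - a ^ ℓ ^ s ≠ 0 := by
      intro h; exact hτ0 (by rw [← neg_sub]; simpa [h] )
    exact nuP_eq_nuP P hn0 hτ0 ((dvd_neg).mp (by rw [neg_sub])) ((dvd_neg).mpr dvd_rfl |>.trans (by rw [neg_sub]))
  exact ⟨h1, by rw [← hsum, h3, h2]⟩

end SideLemma

section HalfLemma
open scoped Classical

variable {R : Type*} [CommRing R] [IsDomain R] [IsDedekindDomain R]

lemma half_lemma {P : Ideal R} (hP : Prime P) {ℓ : ℕ} (hl : ℓ.Prime)
    (hchar : ∀ r : ℕ, ((r : ℕ) : R) ∈ P ↔ ℓ ∣ r)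
    {n : ℕ} {ω : R} (hω1 : ω ≠ 1)
    {c n₀ : ℕ} (hn₀ : ¬ ℓ ∣ n₀) (hωn : ω ^ (ℓ ^ c * n₀) = 1)
    {p s p₀ : ℕ} (hpe : p = ℓ ^ s * p₀) (hp₀ : ¬ ℓ ∣ p₀) {q : ℕ} (hq : ¬ ℓ ∣ q)
    (α β : Fin n → R) (hα : ∀ i, α i ^ p = ω) (hβ : ∀ j, β j ^ q = ω)
    (hmult : ∀ i j, (univ.filter fun i' => α i' = α i).card +
      (univ.filter fun j' => β j' = β j).card ≤ n) :
    ∑ i, nuP P (α i - 1) + ∑ j, nuP P (β j - 1) ≤ n * nuP P (ω - 1) := by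
  have hspos : 0 < ℓ ^ s := pow_pos hl.pos s
  have hsidea : ∀ i, α i - 1 ∈ P →
      α i ^ ℓ ^ (s + c) = 1 ∧ ℓ ^ s * nuP P (α i - 1) = nuP P (ω - 1) :=
    fun i hi => side_lemma hP hl hchar hω1 hn₀ hωn hp₀ (by rw [← hpe]; exact hα i) hi
  have hsideb : ∀ j, β j - 1 ∈ P →
      β j ^ ℓ ^ (0 + c) = 1 ∧ nuP P (β j - 1) = nuP P (ω - 1) := by
    intro j hj
    have := side_lemma hP hl hchar hω1 hn₀ hωn hq
      (a := β j) (s := 0) (by simpa using hβ j) hj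
    simpa using this
  have hα1 : ∀ i, α i ≠ 1 := fun i h => hω1 (by rw [← hα i, h, one_pow])
  have hβ1 : ∀ j, β j ≠ 1 := fun j h => hω1 (by rw [← hβ j, h, one_pow])
  have hαz : ∀ i, α i - 1 ≠ 0 := fun i => sub_ne_zero.mpr (hα1 i)
  have hβz : ∀ j, β j - 1 ≠ 0 := fun j => sub_ne_zero.mpr (hβ1 j)
  set E := nuP P (ω - 1) with hE
  -- reduce sums to the bad sets
  set Abad := univ.filter (fun i : Fin n => α i - 1 ∈ P) with hAbad
  set Bbad := univ.filter (fun j : Fin n => β j - 1 ∈ P) with hBbad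
  have hsumA : ∑ i, nuP P (α i - 1) = ∑ i ∈ Abad, nuP P (α i - 1) := by
    rw [hAbad, Finset.sum_filter_of_ne]
    intro i _ hne
    by_contra hmem
    exact hne (nuP_eq_zero hP (hαz i) hmem)
  have hsumB : ∑ j, nuP P (β j - 1) = ∑ j ∈ Bbad, nuP P (β j - 1) := by
    rw [hBbad, Finset.sum_filter_of_ne]
    intro j _ hne
    by_contra hmem
    exact hne (nuP_eq_zero hP (hβz j) hmem)
  have hBval : ∀ j ∈ Bbad, nuP P (β j - 1) = E := by
    intro j hj
    exact (hsideb j (Finset.mem_filter.mp hj).2).2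
  have hsumB' : ∑ j ∈ Bbad, nuP P (β j - 1) = Bbad.card * E := by
    rw [Finset.sum_congr rfl hBval, Finset.sum_const, smul_eq_mul]
  have hWn : Bbad.card ≤ n := by
    calc Bbad.card ≤ (univ : Finset (Fin n)).card := Finset.card_filter_le _ _
      _ = n := by simp
  have hAn : Abad.card ≤ n := by
    calc Abad.card ≤ (univ : Finset (Fin n)).card := Finset.card_filter_le _ _
      _ = n := by simp
  rw [hsumA, hsumB, hsumB']
  -- case: no bad β
  rcases Nat.eq_zero_or_pos Bbad.card with hW | hW
  · rw [hW, zero_mul, add_zero]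
    calc ∑ i ∈ Abad, nuP P (α i - 1) ≤ ∑ _i ∈ Abad, E := by
          refine Finset.sum_le_sum fun i hi => ?_
          have := (hsidea i (Finset.mem_filter.mp hi).2).2
          calc nuP P (α i - 1) ≤ ℓ ^ s * nuP P (α i - 1) :=
                Nat.le_mul_of_pos_left _ hspos
            _ = E := this
      _ = Abad.card * E := by rw [Finset.sum_const, smul_eq_mul]
      _ ≤ n * E := Nat.mul_le_mul_right _ hAn
  -- case: some bad β
  obtain ⟨j₀, hj₀⟩ := Finset.card_pos.mp hW
  have hj₀P : β j₀ - 1 ∈ P := (Finset.mem_filter.mp hj₀).2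
  have hβeq : ∀ j ∈ Bbad, β j = β j₀ := by
    intro j hj
    have hjP : β j - 1 ∈ P := (Finset.mem_filter.mp hj).2
    have hcN : ℓ ^ c ≠ 0 := (pow_pos hl.pos c).ne'
    have h0 : Nat.gcd (ℓ ^ c) q = 1 :=
      Nat.Coprime.pow_left c ((hl.coprime_iff_not_dvd).mpr hq)
    have key : ∀ j' ∈ Bbad, β j' * β j₀ ^ (ℓ ^ c - 1) = 1 := by
      intro j' hj'
      have h1 : β j₀ ^ ℓ ^ c = 1 := by
        simpa using (hsideb j₀ hj₀P).1
      have h2 : β j' ^ ℓ ^ c = 1 := by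
        simpa using (hsideb j' (Finset.mem_filter.mp hj').2).1
      have h3 : β j₀ ^ q = β j' ^ q := by rw [hβ, hβ]
      have := coset_pow h1 h2 hcN h3
      rwa [h0, pow_one] at this
    have k1 := key j hj
    have k2 := key j₀ hj₀
    have hb0 : β j₀ ^ (ℓ ^ c - 1) ≠ 0 := by
      intro h
      rw [h, mul_zero] at k2
      exact zero_ne_one k2
    have : (β j - β j₀) * β j₀ ^ (ℓ ^ c - 1) = 0 := by
      rw [sub_mul, k1, k2, sub_self]
    have := (mul_eq_zero.mp this).resolve_right hb0
    exact sub_eq_zero.mp this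
  have hWle : ∀ i : Fin n, (univ.filter fun i' => α i' = α i).card ≤ n - Bbad.card := by
    intro i
    have h1 := hmult i j₀
    have h2 : Bbad.card ≤ (univ.filter fun j' => β j' = β j₀).card := by
      apply Finset.card_le_card
      intro j hj
      exact Finset.mem_filter.mpr ⟨Finset.mem_univ j, hβeq j hj⟩
    omega
  -- bound the bad α set
  rcases Finset.eq_empty_or_nonempty Abad with hA | ⟨i₀, hi₀⟩
  · rw [hA]
    simp only [Finset.sum_empty, zero_add]
    exact Nat.mul_le_mul_right _ hWn
  have hi₀P : α i₀ - 1 ∈ P := (Finset.mem_filter.mp hi₀).2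
  set aval := nuP P (α i₀ - 1) with haval
  have havalE : ℓ ^ s * aval = E := (hsidea i₀ hi₀P).2
  have hAval : ∀ i ∈ Abad, nuP P (α i - 1) = aval := by
    intro i hi
    have h1 := (hsidea i (Finset.mem_filter.mp hi).2).2
    have := h1.trans havalE.symm
    exact Nat.eq_of_mul_eq_mul_left hspos this
  have hsumA' : ∑ i ∈ Abad, nuP P (α i - 1) = Abad.card * aval := by
    rw [Finset.sum_congr rfl hAval, Finset.sum_const, smul_eq_mul]
  -- the coset map
  have hNne : ℓ ^ (s + c) ≠ 0 := (pow_pos hl.pos (s + c)).ne'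
  have hgcd : Nat.gcd (ℓ ^ (s + c)) p = ℓ ^ s := by
    rw [hpe, pow_add, Nat.gcd_mul_left]
    rw [Nat.Coprime.gcd_eq_one (Nat.Coprime.pow_left c ((hl.coprime_iff_not_dvd).mpr hp₀)),
      mul_one]
  have hz : ∀ i ∈ Abad, (α i * α i₀ ^ (ℓ ^ (s + c) - 1)) ^ ℓ ^ s = 1 := by
    intro i hi
    have h1 : α i₀ ^ ℓ ^ (s + c) = 1 := (hsidea i₀ hi₀P).1
    have h2 : α i ^ ℓ ^ (s + c) = 1 := (hsidea i (Finset.mem_filter.mp hi).2).1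
    have h3 : α i₀ ^ p = α i ^ p := by rw [hα, hα]
    have := coset_pow h1 h2 hNne h3
    rwa [hgcd] at this
  have hahat0 : α i₀ ^ (ℓ ^ (s + c) - 1) ≠ 0 := by
    intro h
    have h1 : α i₀ ^ ℓ ^ (s + c) = 1 := (hsidea i₀ hi₀P).1
    have hsp : ℓ ^ (s + c) = 1 + (ℓ ^ (s + c) - 1) := by
      have := pow_pos hl.pos (s + c); omega
    rw [hsp, pow_add, pow_one, h, mul_zero] at h1
    exact zero_ne_one h1
  have hcard : Abad.card ≤ (n - Bbad.card) * ℓ ^ s := by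
    have himg : (Abad.image fun i => α i * α i₀ ^ (ℓ ^ (s + c) - 1)).card ≤ ℓ ^ s := by
      have hsub : (Abad.image fun i => α i * α i₀ ^ (ℓ ^ (s + c) - 1)) ⊆
          nthRootsFinset (ℓ ^ s) (1 : R) := by
        intro x hx
        obtain ⟨i, hi, rfl⟩ := Finset.mem_image.mp hx
        exact (Polynomial.mem_nthRootsFinset hspos (1 : R)).mpr (hz i hi)
      calc (Abad.image fun i => α i * α i₀ ^ (ℓ ^ (s + c) - 1)).card
          ≤ (nthRootsFinset (ℓ ^ s) (1 : R)).card := Finset.card_le_card hsub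
        _ ≤ (nthRoots (ℓ ^ s) (1 : R)).card := Multiset.toFinset_card_le _
        _ ≤ ℓ ^ s := Polynomial.card_nthRoots _ _
    have hfib : ∀ b ∈ Abad.image fun i => α i * α i₀ ^ (ℓ ^ (s + c) - 1),
        (Abad.filter fun i => α i * α i₀ ^ (ℓ ^ (s + c) - 1) = b).card ≤ n - Bbad.card := by
      intro b hb
      obtain ⟨i₁, hi₁, rfl⟩ := Finset.mem_image.mp hb
      have hsub : (Abad.filter fun i => α i * α i₀ ^ (ℓ ^ (s + c) - 1) =
          α i₁ * α i₀ ^ (ℓ ^ (s + c) - 1)) ⊆ univ.filter fun i' => α i' = α i₁ := by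
        intro i hi
        have h := (Finset.mem_filter.mp hi).2
        have : (α i - α i₁) * α i₀ ^ (ℓ ^ (s + c) - 1) = 0 := by
          rw [sub_mul, h, sub_self]
        have := (mul_eq_zero.mp this).resolve_right hahat0
        exact Finset.mem_filter.mpr ⟨Finset.mem_univ i, sub_eq_zero.mp this⟩
      calc _ ≤ (univ.filter fun i' => α i' = α i₁).card := Finset.card_le_card hsub
        _ ≤ n - Bbad.card := hWle i₁
    calc Abad.card ≤ (n - Bbad.card) *
          (Abad.image fun i => α i * α i₀ ^ (ℓ ^ (s + c) - 1)).card :=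
          Finset.card_le_mul_card_image _ _ hfib
      _ ≤ (n - Bbad.card) * ℓ ^ s := Nat.mul_le_mul_left _ himg
  -- final arithmetic
  rw [hsumA']
  calc Abad.card * aval + Bbad.card * E
      ≤ ((n - Bbad.card) * ℓ ^ s) * aval + Bbad.card * E := by
        exact Nat.add_le_add_right (Nat.mul_le_mul_right _ hcard) _
    _ = (n - Bbad.card) * E + Bbad.card * E := by rw [mul_assoc, havalE]
    _ = n * E := by
        rw [← Nat.add_mul]
        congr 1
        omega

end HalfLemma

section MainDvd
open scoped Classical

variable {R : Type*} [CommRing R] [IsDomain R] [IsDedekindDomain R]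

theorem main_dvd (p q n : ℕ) (hp : 0 < p) (hq : 0 < q) (hpq : Nat.Coprime p q)
    (hn : 1 ≤ n) (ω : R) (hω : ω ^ n = 1) (hω1 : ω ≠ 1)
    (α β : Fin n → R) (hα : ∀ i, α i ^ p = ω) (hβ : ∀ j, β j ^ q = ω)
    (hα1 : ∀ i, α i ≠ 1) (hβ1 : ∀ j, β j ≠ 1)
    (hmult : ∀ i j,
      (Finset.univ.filter fun i' => α i' = α i).card +
        (Finset.univ.filter fun j' => β j' = β j).card ≤ n) :
    ((∏ i, (α i - 1)) * ∏ j, (β j - 1)) ∣ (ω - 1) ^ n := by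
  have hαz : ∀ i, α i - 1 ≠ 0 := fun i => sub_ne_zero.mpr (hα1 i)
  have hβz : ∀ j, β j - 1 ≠ 0 := fun j => sub_ne_zero.mpr (hβ1 j)
  have hωz : ω - 1 ≠ 0 := sub_ne_zero.mpr hω1
  have hden : ((∏ i, (α i - 1)) * ∏ j, (β j - 1)) ≠ 0 :=
    mul_ne_zero (Finset.prod_ne_zero_iff.mpr fun i _ => hαz i)
      (Finset.prod_ne_zero_iff.mpr fun j _ => hβz j)
  have hnum : (ω - 1) ^ n ≠ 0 := pow_ne_zero _ hωz
  suffices h : Ideal.span {(∏ i, (α i - 1)) * ∏ j, (β j - 1)} ∣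
      Ideal.span {(ω - 1) ^ n} by
    exact Ideal.mem_span_singleton.mp
      (Ideal.dvd_iff_le.mp h (Ideal.mem_span_singleton.mpr dvd_rfl))
  rw [dvd_iff_normalizedFactors_le_normalizedFactors (spanP_ne_zero hden) (spanP_ne_zero hnum)]
  refine Multiset.le_iff_count.mpr fun P => ?_
  by_cases hmem : P ∈ normalizedFactors (Ideal.span
      {(∏ i, (α i - 1)) * ∏ j, (β j - 1)})
  swap
  · simp [Multiset.count_eq_zero_of_notMem hmem]
  have hP : Prime P := prime_of_normalized_factor P hmem
  have hPp : P.IsPrime := Ideal.isPrime_of_prime hP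
  show nuP P ((∏ i, (α i - 1)) * ∏ j, (β j - 1)) ≤
    nuP P ((ω - 1) ^ n)
  rw [nuP_mul P (Finset.prod_ne_zero_iff.mpr fun i _ => hαz i)
      (Finset.prod_ne_zero_iff.mpr fun j _ => hβz j),
    nuP_prod P _ _ (fun i _ => hαz i), nuP_prod P _ _ (fun j _ => hβz j),
    nuP_pow P hωz]
  by_cases hωP : ω - 1 ∈ P
  swap
  · have hA : ∀ i, nuP P (α i - 1) = 0 := by
      intro i
      refine nuP_eq_zero hP (hαz i) fun hmem' => hωP (memP_of_dvd hmem' ?_)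
      have := sub_dvd_pow_sub_pow (α i) 1 p
      simpa [hα i] using this
    have hB : ∀ j, nuP P (β j - 1) = 0 := by
      intro j
      refine nuP_eq_zero hP (hβz j) fun hmem' => hωP (memP_of_dvd hmem' ?_)
      have := sub_dvd_pow_sub_pow (β j) 1 q
      simpa [hβ j] using this
    simp [hA, hB]
  -- find the residue characteristic ℓ
  have hnP : ((n : ℕ) : R) ∈ P := factA hω1 hωP hω
  set I : Ideal ℤ := P.comap (Int.castRingHom R) with hI
  haveI hIp : I.IsPrime := Ideal.IsPrime.comap _
  have hnI : ((n : ℕ) : ℤ) ∈ I := by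
    rw [hI, Ideal.mem_comap]
    simpa using hnP
  set g : ℤ := Submodule.IsPrincipal.generator I with hg
  have hgen : Ideal.span {g} = I := Ideal.span_singleton_generator I
  have hg0 : g ≠ 0 := by
    intro h
    rw [h] at hgen
    rw [← hgen, Ideal.span_singleton_eq_bot.mpr rfl] at hnI
    simp only [Ideal.mem_bot] at hnI
    have : n = 0 := by exact_mod_cast hnI
    omega
  have hgprime : Prime g := by
    rw [← Ideal.span_singleton_prime hg0, hgen]
    exact hIp
  set ℓ : ℕ := g.natAbs with hldef
  have hl : ℓ.Prime := Int.prime_iff_natAbs_prime.mp hgprime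
  have hchar : ∀ r : ℕ, ((r : ℕ) : R) ∈ P ↔ ℓ ∣ r := by
    intro r
    have h1 : ((r : ℕ) : R) = (Int.castRingHom R) ((r : ℕ) : ℤ) := by
      simp
    rw [h1, ← Ideal.mem_comap, ← hI, ← hgen, Ideal.mem_span_singleton]
    constructor
    · intro h
      exact_mod_cast (Int.natAbs_dvd.mpr h : (ℓ : ℤ) ∣ _)
    · intro h
      exact Int.natAbs_dvd.mp (by exact_mod_cast h)
  -- split off the ℓ-parts
  have hn0 : n ≠ 0 := by omega
  have hnfact : n = ℓ ^ n.factorization ℓ * (n / ℓ ^ n.factorization ℓ) :=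
    (Nat.ordProj_mul_ordCompl_eq_self n ℓ).symm
  have hn₀ : ¬ ℓ ∣ n / ℓ ^ n.factorization ℓ := Nat.not_dvd_ordCompl hl hn0
  have hωn' : ω ^ (ℓ ^ n.factorization ℓ * (n / ℓ ^ n.factorization ℓ)) = 1 := by
    rw [← hnfact]; exact hω
  have hpqsplit : ¬ ℓ ∣ p ∨ ¬ ℓ ∣ q := by
    by_contra hcon
    push_neg at hcon
    have : ℓ ∣ Nat.gcd p q := Nat.dvd_gcd hcon.1 hcon.2
    rw [hpq] at this
    exact hl.one_lt.ne' (Nat.dvd_one.mp this)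
  rcases hpqsplit with hcase | hcase
  · -- ℓ ∤ p : β is the "structured" side... apply half_lemma with roles swapped
    have hqfact : q = ℓ ^ q.factorization ℓ * (q / ℓ ^ q.factorization ℓ) :=
      (Nat.ordProj_mul_ordCompl_eq_self q ℓ).symm
    have hq₀ : ¬ ℓ ∣ q / ℓ ^ q.factorization ℓ := Nat.not_dvd_ordCompl hl (by omega)
    have := half_lemma hP hl hchar hω1 hn₀ hωn' hqfact hq₀ hcase β α hβ hα
      (fun j i => by have := hmult i j; omega)
    omega
  · have hpfact : p = ℓ ^ p.factorization ℓ * (p / ℓ ^ p.factorization ℓ) :=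
      (Nat.ordProj_mul_ordCompl_eq_self p ℓ).symm
    have hp₀ : ¬ ℓ ∣ p / ℓ ^ p.factorization ℓ := Nat.not_dvd_ordCompl hl (by omega)
    have := half_lemma hP hl hchar hω1 hn₀ hωn' hpfact hp₀ hcase α β hα hβ hmult
    omega

end MainDvd

section Glue

lemma isIntegral_of_pow_eq_one' {Rb F : Type*} [CommRing Rb] [CommRing F] [Algebra Rb F]
    {y : F} {L : ℕ} (hL : L ≠ 0) (hy : y ^ L = 1) : IsIntegral Rb y :=
  ⟨X ^ L - C 1, monic_X_pow_sub_C 1 hL, by simp [hy]⟩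

end Glue

theorem stmt17 (p q n : ℕ) (hp : 0 < p) (hq : 0 < q) (hpq : Nat.Coprime p q)
    (hn : 1 ≤ n) (ω : ℂ) (hω : ω ^ n = 1) (hω1 : ω ≠ 1)
    (α β : Fin n → ℂ) (hα : ∀ i, α i ^ p = ω) (hβ : ∀ j, β j ^ q = ω)
    (hα1 : ∀ i, α i ≠ 1) (hβ1 : ∀ j, β j ≠ 1)
    (hmult : ∀ i j,
      (Finset.univ.filter fun i' => α i' = α i).card +
        (Finset.univ.filter fun j' => β j' = β j).card ≤ n) :
    IsIntegral ℤ
      ((ω - 1) ^ n / ((∏ i, (α i - 1)) * ∏ j, (β j - 1))) := by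
  have hL0 : p * q * n ≠ 0 := by positivity
  set L := p * q * n with hL
  have hζ := Complex.isPrimitiveRoot_exp L hL0
  set ζ := Complex.exp (2 * Real.pi * Complex.I / L) with hζdef
  haveI : NeZero L := ⟨hL0⟩
  have hωL : ω ^ L = 1 := by
    have h1 : L = n * (p * q) := by rw [hL]; ring
    rw [h1, pow_mul, hω, one_pow]
  have hαL : ∀ i, α i ^ L = 1 := by
    intro i
    have h1 : L = p * (n * q) := by rw [hL]; ring
    calc α i ^ L = ((α i ^ p) ^ n) ^ q := by rw [h1, pow_mul, pow_mul]
      _ = 1 := by rw [hα i, hω, one_pow]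
  have hβL : ∀ j, β j ^ L = 1 := by
    intro j
    have h1 : L = q * (n * p) := by rw [hL]; ring
    calc β j ^ L = ((β j ^ q) ^ n) ^ p := by rw [h1, pow_mul, pow_mul]
      _ = 1 := by rw [hβ j, hω, one_pow]
  have hζint : IsIntegral ℚ ζ := isIntegral_of_pow_eq_one' hL0 hζ.pow_eq_one
  set K := IntermediateField.adjoin ℚ ({ζ} : Set ℂ) with hK
  haveI : FiniteDimensional ℚ K := IntermediateField.adjoin.finiteDimensional hζint
  haveI : NumberField K := ⟨⟩
  have hmemK : ∀ x : ℂ, x ^ L = 1 → x ∈ K := by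
    intro x hx
    obtain ⟨i, -, hi⟩ := hζ.eq_pow_of_pow_eq_one hx
    rw [← hi]
    exact pow_mem (IntermediateField.subset_adjoin ℚ {ζ} (Set.mem_singleton ζ)) i
  have hintK : ∀ (x : ℂ) (hx : x ^ L = 1),
      (⟨x, hmemK x hx⟩ : K) ∈ integralClosure ℤ K := by
    intro x hx
    rw [mem_integralClosure_iff]
    refine isIntegral_of_pow_eq_one' hL0 ?_
    have : (((⟨x, hmemK x hx⟩ : K) ^ L : K) : ℂ) = 1 := by push_cast [hx]; rfl
    exact_mod_cast this
  set A : Fin n → NumberField.RingOfIntegers K :=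
    fun i => ⟨⟨α i, hmemK _ (hαL i)⟩, hintK _ (hαL i)⟩ with hAdef
  set B : Fin n → NumberField.RingOfIntegers K :=
    fun j => ⟨⟨β j, hmemK _ (hβL j)⟩, hintK _ (hβL j)⟩ with hBdef
  set Ω : NumberField.RingOfIntegers K := ⟨⟨ω, hmemK _ hωL⟩, hintK _ hωL⟩ with hΩdef
  set J : NumberField.RingOfIntegers K →+* ℂ :=
    (K.val.toRingHom).comp (algebraMap (NumberField.RingOfIntegers K) K) with hJdef
  have hJA : ∀ i, J (A i) = α i := fun i => rfl
  have hJB : ∀ j, J (B j) = β j := fun j => rfl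
  have hJΩ : J Ω = ω := rfl
  have hJinj : Function.Injective J := by
    intro x y h
    refine NumberField.RingOfIntegers.ext ?_
    exact Subtype.coe_injective h
  have hΩn : Ω ^ n = 1 := by
    apply hJinj
    rw [map_pow, hJΩ, map_one, hω]
  have hΩ1 : Ω ≠ 1 := fun h => hω1 (by rw [← hJΩ, h, map_one])
  have hApow : ∀ i, A i ^ p = Ω := by
    intro i
    apply hJinj
    rw [map_pow, hJA, hJΩ, hα i]
  have hBpow : ∀ j, B j ^ q = Ω := by
    intro j
    apply hJinj
    rw [map_pow, hJB, hJΩ, hβ j]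
  have hA1 : ∀ i, A i ≠ 1 := fun i h => hα1 i (by rw [← hJA i, h, map_one])
  have hB1 : ∀ j, B j ≠ 1 := fun j h => hβ1 j (by rw [← hJB j, h, map_one])
  obtain ⟨t, ht⟩ := main_dvd p q n hp hq hpq hn Ω hΩn hΩ1 A B hApow hBpow hA1 hB1
    (by
      intro i j
      refine le_trans (add_le_add (Finset.card_le_card ?_) (Finset.card_le_card ?_))
        (hmult i j)
      · intro x hx
        simp only [Finset.mem_filter] at hx ⊢
        exact ⟨hx.1, by rw [← hJA x, ← hJA i, hx.2]⟩
      · intro x hx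
        simp only [Finset.mem_filter] at hx ⊢
        exact ⟨hx.1, by rw [← hJB x, ← hJB j, hx.2]⟩)
  have hD0 : ((∏ i, (α i - 1)) * ∏ j, (β j - 1)) ≠ 0 :=
    mul_ne_zero (Finset.prod_ne_zero_iff.mpr fun i _ => sub_ne_zero.mpr (hα1 i))
      (Finset.prod_ne_zero_iff.mpr fun j _ => sub_ne_zero.mpr (hβ1 j))
  have hJnum : J ((Ω - 1) ^ n) = (ω - 1) ^ n := by
    rw [map_pow, map_sub, map_one, hJΩ]
  have hJden : J ((∏ i, (A i - 1)) * ∏ j, (B j - 1)) =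
      (∏ i, (α i - 1)) * ∏ j, (β j - 1) := by
    simp only [map_mul, map_prod, map_sub, map_one, hJA, hJB]
  have key : (ω - 1) ^ n = ((∏ i, (α i - 1)) * ∏ j, (β j - 1)) * J t := by
    rw [← hJnum, ht, map_mul, hJden]
  have hdiv : (ω - 1) ^ n / ((∏ i, (α i - 1)) * ∏ j, (β j - 1)) = J t := by
    rw [key, mul_comm, mul_div_assoc, div_self hD0, mul_one]
  rw [hdiv]
  have h1 : IsIntegral ℤ ((t : K)) := NumberField.RingOfIntegers.isIntegral_coe t
  have h2 : IsIntegral ℤ ((K.val.restrictScalars ℤ) (t : K)) :=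
    IsIntegral.map (K.val.restrictScalars ℤ) h1
  exact h2
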